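/- Let θ ∈ ℤ^{Q0} with θ((V_i)_i) = 0 and set Q0⁺ := {i ∈ Q0 : θ_i ≥ 0}. If M is a θ-semi-stable representation of Q on (V_i), then for every vertex j ∈ Q0 the linear map ⊕_p V_{s(p)} → V_j, (v_p)_p ↦ Σ_p M_p(v_p), where p runs over all paths in Q with source s(p) ∈ Q0⁺ and target t(p) = j (including, when j ∈ Q0⁺, the trivial path at j), is surjective. (Equivalently: the canonical homomorphism φ_M : P⁺ → M from the projective representation P⁺ = ⊕_{i∈Q0⁺} P(i) ⊗ V_i is surjective.) -/

import Mathlib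

open Module

/-- Paths in a quiver with arrow set `Q1`, source map `src` and target map `tgt`.
`QPath src tgt i j` is the type of (oriented) paths from vertex `i` to vertex `j`;
`cons a p` appends the arrow `a` at the target end of the path `p`. -/
inductive QPath {Q0 Q1 : Type} (src tgt : Q1 → Q0) : Q0 → Q0 → Type
  | nil (i : Q0) : QPath src tgt i i
  | cons {i : Q0} (a : Q1) (p : QPath src tgt i (src a)) : QPath src tgt i (tgt a)

/-- For a representation `M` of the quiver on the spaces `V i`, `pathMap M p` is the
composite linear map `M_p : V i →ₗ V j` along the path `p : QPath src tgt i j`. -/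
def pathMap {k Q0 Q1 : Type} [Field k] {src tgt : Q1 → Q0} {V : Q0 → Type}
    [∀ i, AddCommGroup (V i)] [∀ i, Module k (V i)]
    (M : ∀ a : Q1, V (src a) →ₗ[k] V (tgt a)) :
    {i j : Q0} → QPath src tgt i j → (V i →ₗ[k] V j)
  | _, _, QPath.nil _ => LinearMap.id
  | _, _, QPath.cons a p => (M a).comp (pathMap M p)

/-- If `M` is a θ-semi-stable representation of an acyclic quiver, then for every vertex `j`
the canonical map `⊕_p V_{s(p)} → V_j`, summing `M_p` over all paths `p` with source in
`Q0⁺ = {i : θ i ≥ 0}` and target `j`, is surjective (i.e. `φ_M : P⁺ → M` is surjective). -/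
theorem statement0 {k Q0 Q1 : Type} [Field k] [Fintype Q0] [Fintype Q1] [DecidableEq Q0]
    (src tgt : Q1 → Q0) [∀ i j, Fintype (QPath src tgt i j)]
    (V : Q0 → Type) [∀ i, AddCommGroup (V i)] [∀ i, Module k (V i)]
    [∀ i, FiniteDimensional k (V i)]
    (θ : Q0 → ℤ)
    (M : ∀ a : Q1, V (src a) →ₗ[k] V (tgt a))
    (hθ : ∑ i : Q0, θ i * (finrank k (V i) : ℤ) = 0)
    (hss : ∀ U : ∀ i : Q0, Submodule k (V i),
        (∀ a : Q1, ∀ x ∈ U (src a), M a x ∈ U (tgt a)) →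
        ∑ i : Q0, θ i * (finrank k (U i) : ℤ) ≤ 0)
    (j : Q0) :
    Function.Surjective
      (fun w : ∀ p : {p : Σ i : Q0, QPath src tgt i j // 0 ≤ θ p.1}, V p.1.1 =>
        ∑ p : {p : Σ i : Q0, QPath src tgt i j // 0 ≤ θ p.1}, pathMap M p.1.2 (w p)) := by
  classical
  -- the subrepresentation generated by the spaces at nonnegative vertices
  let U : ∀ i : Q0, Submodule k (V i) := fun i =>
    ⨆ p : {p : Σ i' : Q0, QPath src tgt i' i // 0 ≤ θ p.1},
      LinearMap.range (pathMap M p.1.2)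
  have hsub : ∀ a : Q1, ∀ x ∈ U (src a), M a x ∈ U (tgt a) := by
    intro a x hx
    have hmap : (U (src a)).map (M a) ≤ U (tgt a) := by
      rw [Submodule.map_iSup]
      apply iSup_le
      intro p
      rw [← LinearMap.range_comp]
      have h := le_iSup (fun q : {p : Σ i' : Q0, QPath src tgt i' (tgt a) // 0 ≤ θ p.1} =>
        LinearMap.range (pathMap M q.1.2)) ⟨⟨p.1.1, QPath.cons a p.1.2⟩, p.2⟩
      simpa [pathMap] using h
    exact hmap ⟨x, hx, rfl⟩
  have hUtop : ∀ i : Q0, 0 ≤ θ i → U i = ⊤ := by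
    intro i hi
    apply top_unique
    have h1 : LinearMap.range (pathMap M (QPath.nil i : QPath src tgt i i)) = ⊤ := by
      simp [pathMap]
    rw [← h1]
    exact le_iSup (fun q : {p : Σ i' : Q0, QPath src tgt i' i // 0 ≤ θ p.1} =>
      LinearMap.range (pathMap M q.1.2)) ⟨⟨i, QPath.nil i⟩, hi⟩
  -- dimension counting : U i = ⊤ for all i
  have hUall : ∀ i : Q0, U i = ⊤ := by
    have h1 : ∑ i : Q0, θ i * (finrank k (U i) : ℤ) ≤ 0 := hss U hsub
    have hle : ∀ i : Q0, (finrank k (U i) : ℤ) ≤ (finrank k (V i) : ℤ) := fun i => by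
      exact_mod_cast Submodule.finrank_le (U i)
    have hterm : ∀ i : Q0, θ i * (finrank k (V i) : ℤ) - θ i * (finrank k (U i) : ℤ) ≤ 0 := by
      intro i
      rcases le_or_gt 0 (θ i) with h | h
      · rw [hUtop i h, finrank_top]
        simp
      · have := hle i
        nlinarith
    have hsum : ∑ i : Q0,
        (θ i * (finrank k (V i) : ℤ) - θ i * (finrank k (U i) : ℤ)) = 0 := by
      have h2 : ∑ i : Q0,
          (θ i * (finrank k (V i) : ℤ) - θ i * (finrank k (U i) : ℤ)) ≤ 0 :=
        Finset.sum_nonpos (fun i _ => hterm i)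
      have h3 : ∑ i : Q0,
          (θ i * (finrank k (V i) : ℤ) - θ i * (finrank k (U i) : ℤ)) =
          (∑ i : Q0, θ i * (finrank k (V i) : ℤ)) -
          (∑ i : Q0, θ i * (finrank k (U i) : ℤ)) := Finset.sum_sub_distrib _ _
      linarith
    have heach : ∀ i : Q0,
        θ i * (finrank k (V i) : ℤ) - θ i * (finrank k (U i) : ℤ) = 0 := by
      intro i
      have := (Finset.sum_eq_zero_iff_of_nonpos (fun i _ => hterm i)).mp hsum i
        (Finset.mem_univ i)
      exact this
    intro i
    rcases le_or_gt 0 (θ i) with h | h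
    · exact hUtop i h
    · have h0 := heach i
      have hθne : θ i ≠ 0 := by omega
      have hdim : (finrank k (U i) : ℤ) = (finrank k (V i) : ℤ) := by
        have : θ i * ((finrank k (V i) : ℤ) - (finrank k (U i) : ℤ)) = 0 := by ring_nf; linarith [h0]
        rcases mul_eq_zero.mp this with h' | h'
        · exact absurd h' hθne
        · omega
      exact Submodule.eq_top_of_finrank_eq (by exact_mod_cast hdim)
  -- conclude surjectivity
  intro x
  have hx : x ∈ U j := by rw [hUall j]; trivial
  have hrange : U j ≤ LinearMap.range
      (∑ p : {p : Σ i : Q0, QPath src tgt i j // 0 ≤ θ p.1},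
        (pathMap M p.1.2).comp (LinearMap.proj (R := k) (φ := fun q :
          {p : Σ i : Q0, QPath src tgt i j // 0 ≤ θ p.1} => V q.1.1) p)) := by
    apply iSup_le
    intro p
    rintro y ⟨v, rfl⟩
    refine ⟨Pi.single p v, ?_⟩
    simp only [LinearMap.sum_apply, LinearMap.comp_apply, LinearMap.proj_apply]
    rw [Finset.sum_eq_single p]
    · simp
    · intro q _ hq
      rw [Pi.single_eq_of_ne hq, map_zero]
    · intro h; exact absurd (Finset.mem_univ p) h
  obtain ⟨w, hw⟩ := hrange hx
  refine ⟨w, ?_⟩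
  simpa only [LinearMap.sum_apply, LinearMap.comp_apply, LinearMap.proj_apply] using hw
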